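/- Let (M,g,H) be a Riemannian manifold with H a closed 3-form satisfying ∇̂H = 0, where ∇̂ is the metric connection with torsion H. Then H satisfies the Jacobi identity: H^p_{ij} H_{pkm} + H^p_{ik} H_{pmj} + H^p_{im} H_{pjk} = 0 (cyclic sum over j,k,m), so that at each point the operation [X,Y] := (ι_X ι_Y H)^♯ makes the tangent space into a Lie algebra. -/
import Mathlib


open scoped BigOperators

noncomputable section

variable {n : ℕ}

/-- Coordinate partial derivative of a function on `ℝⁿ` in the `i`-th coordinate direction. -/
def pd (i : Fin n) (f : EuclideanSpace ℝ (Fin n) → ℝ) (x : EuclideanSpace ℝ (Fin n)) : ℝ :=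
  fderiv ℝ f x (EuclideanSpace.single i 1)

/-- Lowered Christoffel symbols `Γ_{kij}` of the Levi-Civita connection of the metric `g`. -/
def christoffelLow (g : EuclideanSpace ℝ (Fin n) → Fin n → Fin n → ℝ) (k i j : Fin n)
    (x : EuclideanSpace ℝ (Fin n)) : ℝ :=
  (1 / 2) * (pd i (fun y => g y j k) x + pd j (fun y => g y i k) x - pd k (fun y => g y i j) x)

/-- Christoffel symbols `Γ^k_{ij}` of the Levi-Civita connection `∇` of `g`. -/
def christoffel (g ginv : EuclideanSpace ℝ (Fin n) → Fin n → Fin n → ℝ) (k i j : Fin n)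
    (x : EuclideanSpace ℝ (Fin n)) : ℝ :=
  ∑ l, ginv x k l * christoffelLow g l i j x

/-- Connection coefficients `Γ̂^k_{ij} = Γ^k_{ij} + ½ H^k_{ij}` of the metric connection `∇̂`
with torsion the totally skew 3-form `H` (indices raised with `g`). -/
def christoffelHat (g ginv : EuclideanSpace ℝ (Fin n) → Fin n → Fin n → ℝ)
    (H : EuclideanSpace ℝ (Fin n) → Fin n → Fin n → Fin n → ℝ) (k i j : Fin n)
    (x : EuclideanSpace ℝ (Fin n)) : ℝ :=
  christoffel g ginv k i j x + (1 / 2) * ∑ l, ginv x k l * H x l i j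

/-- Curvature `R̂_{ij}{}^k{}_m` of `∇̂`, with the convention
`(∇̂_i∇̂_j - ∇̂_j∇̂_i) X^k = R̂_{ij}{}^k{}_m X^m` (modulo the torsion term). -/
def curvHatUp (g ginv : EuclideanSpace ℝ (Fin n) → Fin n → Fin n → ℝ)
    (H : EuclideanSpace ℝ (Fin n) → Fin n → Fin n → Fin n → ℝ) (i j k m : Fin n)
    (x : EuclideanSpace ℝ (Fin n)) : ℝ :=
  pd i (christoffelHat g ginv H k j m) x - pd j (christoffelHat g ginv H k i m) x
    + ∑ p, (christoffelHat g ginv H k i p x * christoffelHat g ginv H p j m x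
        - christoffelHat g ginv H k j p x * christoffelHat g ginv H p i m x)

/-- Fully lowered curvature tensor `R̂_{ijkm} = g_{kp} R̂_{ij}{}^p{}_m` of `∇̂`. -/
def curvHat (g ginv : EuclideanSpace ℝ (Fin n) → Fin n → Fin n → ℝ)
    (H : EuclideanSpace ℝ (Fin n) → Fin n → Fin n → Fin n → ℝ) (i j k m : Fin n)
    (x : EuclideanSpace ℝ (Fin n)) : ℝ :=
  ∑ p, g x k p * curvHatUp g ginv H i j p m x

/-- Covariant derivative `∇̂_i H_{jkm}` of the 3-form `H` with respect to `∇̂`. -/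
def nablaHatH (g ginv : EuclideanSpace ℝ (Fin n) → Fin n → Fin n → ℝ)
    (H : EuclideanSpace ℝ (Fin n) → Fin n → Fin n → Fin n → ℝ) (i j k m : Fin n)
    (x : EuclideanSpace ℝ (Fin n)) : ℝ :=
  pd i (fun y => H y j k m) x
    - ∑ p, (christoffelHat g ginv H p i j x * H x p k m
        + christoffelHat g ginv H p i k x * H x j p m
        + christoffelHat g ginv H p i m x * H x j k p)

/-- Covariant derivative `∇_i H_{jkm}` of the 3-form `H` with respect to the
Levi-Civita connection `∇` of `g`. -/
def nablaLCH (g ginv : EuclideanSpace ℝ (Fin n) → Fin n → Fin n → ℝ)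
    (H : EuclideanSpace ℝ (Fin n) → Fin n → Fin n → Fin n → ℝ) (i j k m : Fin n)
    (x : EuclideanSpace ℝ (Fin n)) : ℝ :=
  pd i (fun y => H y j k m) x
    - ∑ p, (christoffel g ginv p i j x * H x p k m
        + christoffel g ginv p i k x * H x j p m
        + christoffel g ginv p i m x * H x j k p)

/-- Components `(dH)_{ijkm}` of the exterior derivative of the 3-form `H`. -/
def extDerH (H : EuclideanSpace ℝ (Fin n) → Fin n → Fin n → Fin n → ℝ) (i j k m : Fin n)
    (x : EuclideanSpace ℝ (Fin n)) : ℝ :=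
  pd i (fun y => H y j k m) x - pd j (fun y => H y i k m) x
    + pd k (fun y => H y i j m) x - pd m (fun y => H y i j k) x

/-- `g` is a smooth Riemannian metric (in the fixed global chart) with inverse `ginv`. -/
def IsRiemannianData (g ginv : EuclideanSpace ℝ (Fin n) → Fin n → Fin n → ℝ) : Prop :=
  (∀ x i j, g x i j = g x j i) ∧
  (∀ (x : EuclideanSpace ℝ (Fin n)) (v : Fin n → ℝ), v ≠ 0 →
    0 < ∑ i, ∑ j, g x i j * v i * v j) ∧
  (∀ x i j, (∑ k, g x i k * ginv x k j) = if i = j then (1 : ℝ) else 0) ∧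
  (∀ i j, ContDiff ℝ (⊤ : ℕ∞) fun x => g x i j) ∧
  (∀ i j, ContDiff ℝ (⊤ : ℕ∞) fun x => ginv x i j)

/-- `H` is a smooth (totally antisymmetric) 3-form. -/
def IsThreeForm (H : EuclideanSpace ℝ (Fin n) → Fin n → Fin n → Fin n → ℝ) : Prop :=
  (∀ x i j k, H x i j k = -H x j i k) ∧
  (∀ x i j k, H x i j k = -H x i k j) ∧
  (∀ i j k, ContDiff ℝ (⊤ : ℕ∞) fun x => H x i j k)

/-- If the 3-form `H` is closed and `∇̂`-covariantly constant, then `H`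
satisfies the Jacobi identity
`H^p_{ij} H_{pkm} + H^p_{ik} H_{pmj} + H^p_{im} H_{pjk} = 0`
(cyclic sum over `j,k,m`, indices raised with `g`), so that at each point the bracket
`[X,Y] := (ι_X ι_Y H)^♯` makes the tangent space into a Lie algebra. -/
theorem jacobi_of_parallel_closed
    (g ginv : EuclideanSpace ℝ (Fin n) → Fin n → Fin n → ℝ)
    (H : EuclideanSpace ℝ (Fin n) → Fin n → Fin n → Fin n → ℝ)
    (hg : IsRiemannianData g ginv) (hH : IsThreeForm H)
    (hclosed : ∀ (x : EuclideanSpace ℝ (Fin n)) (i j k m : Fin n), extDerH H i j k m x = 0)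
    (hpar : ∀ (x : EuclideanSpace ℝ (Fin n)) (i j k m : Fin n),
      nablaHatH g ginv H i j k m x = 0) :
    ∀ (x : EuclideanSpace ℝ (Fin n)) (i j k m : Fin n),
      ∑ p, ((∑ l, ginv x p l * H x l i j) * H x p k m
          + (∑ l, ginv x p l * H x l i k) * H x p m j
          + (∑ l, ginv x p l * H x l i m) * H x p j k) = 0 := by
  obtain ⟨gsymm, -, hginv, -, -⟩ := hg
  obtain ⟨h1, h2, -⟩ := hH
  intro x i j k m
  -- symmetry of the inverse metric
  have Gsymm : ∀ a b : Fin n, ginv x a b = ginv x b a := by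
    intro a b
    set G : Matrix (Fin n) (Fin n) ℝ := Matrix.of fun a b => g x a b with hGdef
    set Gi : Matrix (Fin n) (Fin n) ℝ := Matrix.of fun a b => ginv x a b with hGidef
    have hGG : G * Gi = 1 := by
      ext a b
      simpa [hGdef, hGidef, Matrix.mul_apply, Matrix.one_apply] using hginv x a b
    have hGT : G.transpose = G := by
      ext a b; simp [hGdef, Matrix.transpose_apply]; exact gsymm x b a
    have hGiTG : Gi.transpose * G = 1 := by
      calc Gi.transpose * G = Gi.transpose * G.transpose := by rw [hGT]
        _ = (G * Gi).transpose := (Matrix.transpose_mul G Gi).symm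
        _ = 1 := by rw [hGG, Matrix.transpose_one]
    have hGiT : Gi.transpose = Gi := by
      calc Gi.transpose = Gi.transpose * (G * Gi) := by rw [hGG, Matrix.mul_one]
        _ = (Gi.transpose * G) * Gi := by rw [Matrix.mul_assoc]
        _ = Gi := by rw [hGiTG, Matrix.one_mul]
    have := congrFun (congrFun hGiT b) a
    simpa [hGidef, Matrix.transpose_apply] using this
  -- antisymmetry of the raised-index H in its lower indices
  have Es : ∀ (p a b : Fin n), (∑ l, ginv x p l * H x l a b)
      = -∑ l, ginv x p l * H x l b a := by
    intro p a b
    rw [← Finset.sum_neg_distrib]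
    refine Finset.sum_congr rfl fun l _ => ?_
    rw [h2 x l a b]; ring
  -- symmetry of the Levi-Civita Christoffel symbols
  have Cs : ∀ (p a b : Fin n), christoffel g ginv p a b x = christoffel g ginv p b a x := by
    intro p a b
    unfold christoffel
    refine Finset.sum_congr rfl fun l _ => ?_
    unfold christoffelLow
    have hab : (fun y => g y a b) = fun y => g y b a := funext fun y => gsymm y a b
    rw [hab]; ring
  -- antisymmetry facts for H
  have rjpm : ∀ p : Fin n, H x j p m = -H x p j m := fun p => h1 x j p m
  have ripm : ∀ p : Fin n, H x i p m = -H x p i m := fun p => h1 x i p m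
  have ripk : ∀ p : Fin n, H x i p k = -H x p i k := fun p => h1 x i p k
  have rjkp : ∀ p : Fin n, H x j k p = H x p j k := by
    intro p; rw [h2 x j k p, h1 x j p k]; ring
  have rikp : ∀ p : Fin n, H x i k p = H x p i k := by
    intro p; rw [h2 x i k p, h1 x i p k]; ring
  have rijp : ∀ p : Fin n, H x i j p = H x p i j := by
    intro p; rw [h2 x i j p, h1 x i p j]; ring
  -- parallelism rewritten
  have hP : ∀ a b c d : Fin n, pd a (fun y => H y b c d) x
      = ∑ p, (christoffelHat g ginv H p a b x * H x p c d
          + christoffelHat g ginv H p a c x * H x b p d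
          + christoffelHat g ginv H p a d x * H x b c p) := by
    intro a b c d
    have h0 := hpar x a b c d
    unfold nablaHatH at h0
    linarith
  -- closedness rewritten
  have hcomb :
      (∑ p, (christoffelHat g ginv H p i j x * H x p k m
          + christoffelHat g ginv H p i k x * H x j p m
          + christoffelHat g ginv H p i m x * H x j k p))
      - (∑ p, (christoffelHat g ginv H p j i x * H x p k m
          + christoffelHat g ginv H p j k x * H x i p m
          + christoffelHat g ginv H p j m x * H x i k p))
      + (∑ p, (christoffelHat g ginv H p k i x * H x p j m
          + christoffelHat g ginv H p k j x * H x i p m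
          + christoffelHat g ginv H p k m x * H x i j p))
      - (∑ p, (christoffelHat g ginv H p m i x * H x p j k
          + christoffelHat g ginv H p m j x * H x i p k
          + christoffelHat g ginv H p m k x * H x i j p)) = 0 := by
    have h0 := hclosed x i j k m
    unfold extDerH at h0
    rw [hP i j k m, hP j i k m, hP k i j m, hP m i j k] at h0
    linarith
  -- the combined sum as a single sum of nice per-index terms
  have key :
      ∑ p, (((∑ l, ginv x p l * H x l i j) * H x p k m
            + (∑ l, ginv x p l * H x l k m) * H x p i j)
          - ((∑ l, ginv x p l * H x l i k) * H x p j m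
            + (∑ l, ginv x p l * H x l j m) * H x p i k)
          + ((∑ l, ginv x p l * H x l i m) * H x p j k
            + (∑ l, ginv x p l * H x l j k) * H x p i m)) = 0 := by
    rw [← hcomb]
    rw [← Finset.sum_sub_distrib, ← Finset.sum_add_distrib, ← Finset.sum_sub_distrib]
    refine Finset.sum_congr rfl fun p _ => ?_
    simp only [christoffelHat]
    rw [Cs p j i, Cs p k i, Cs p k j, Cs p m i, Cs p m j, Cs p m k]
    rw [Es p j i, Es p k i, Es p k j, Es p m i, Es p m j, Es p m k]
    rw [rjpm p, ripm p, ripk p, rjkp p, rikp p, rijp p]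
    ring
  -- symmetry of the quadratic expression T(ab,cd) = T(cd,ab)
  have Tsymm : ∀ a b c d : Fin n,
      (∑ p, (∑ l, ginv x p l * H x l a b) * H x p c d)
      = ∑ p, (∑ l, ginv x p l * H x l c d) * H x p a b := by
    intro a b c d
    simp only [Finset.sum_mul]
    rw [Finset.sum_comm]
    refine Finset.sum_congr rfl fun p _ => Finset.sum_congr rfl fun l _ => ?_
    rw [Gsymm l p]; ring
  have split :
      (∑ p, (∑ l, ginv x p l * H x l i j) * H x p k m)
      - (∑ p, (∑ l, ginv x p l * H x l i k) * H x p j m)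
      + (∑ p, (∑ l, ginv x p l * H x l i m) * H x p j k) = 0 := by
    have e1 := Tsymm k m i j
    have e2 := Tsymm j m i k
    have e3 := Tsymm j k i m
    rw [Finset.sum_add_distrib, Finset.sum_sub_distrib, Finset.sum_add_distrib,
      Finset.sum_add_distrib, Finset.sum_add_distrib] at key
    linarith
  -- finish: rewrite the middle term of the goal
  have emid : (∑ p, (∑ l, ginv x p l * H x l i k) * H x p m j)
      = -∑ p, (∑ l, ginv x p l * H x l i k) * H x p j m := by
    rw [← Finset.sum_neg_distrib]
    refine Finset.sum_congr rfl fun p _ => ?_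
    rw [h2 x p m j]; ring
  rw [Finset.sum_add_distrib, Finset.sum_add_distrib, emid]
  linarith
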